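/- Let m > 1 be an integer. The natural density of the set of positive integers n such that the largest t with m^t | n is odd equals 1/(m+1). That is, if G(N) counts the i with 1 ≤ i ≤ N whose m-adic valuation is odd, then lim_{N→∞} G(N)/N = 1/(m+1). -/

import Mathlib

open Filter Topology

-- step 1: valuation characterization
lemma val_ge_iff {m : ℕ} (hm : 1 < m) {i t : ℕ} (hi : 0 < i) :
    t ≤ padicValNat m i ↔ m ^ t ∣ i := by
  rw [padicValNat_def' hm.ne' hi.ne']
  exact ((Nat.finiteMultiplicity_iff.2 ⟨hm.ne', hi⟩).pow_dvd_iff_le_multiplicity).symm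

lemma card_val_ge {m : ℕ} (hm : 1 < m) (N t : ℕ) :
    ((Finset.Icc 1 N).filter (fun i => t ≤ padicValNat m i)).card = N / m ^ t := by
  rw [← Nat.Ioc_filter_dvd_card_eq_div]
  congr 1
  ext i
  simp only [Finset.mem_filter, Finset.mem_Icc, Finset.mem_Ioc]
  constructor
  · rintro ⟨⟨h1, h2⟩, h3⟩
    exact ⟨⟨h1, h2⟩, (val_ge_iff hm h1).mp h3⟩
  · rintro ⟨⟨h1, h2⟩, h3⟩
    exact ⟨⟨h1, h2⟩, (val_ge_iff hm h1).mpr h3⟩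

lemma card_val_eq {m : ℕ} (hm : 1 < m) (N t : ℕ) :
    ((Finset.Icc 1 N).filter (fun i => padicValNat m i = t)).card
      = N / m ^ t - N / m ^ (t + 1) := by
  have key : ((Finset.Icc 1 N).filter (fun i => t ≤ padicValNat m i)).card
      = ((Finset.Icc 1 N).filter (fun i => padicValNat m i = t)).card
        + ((Finset.Icc 1 N).filter (fun i => t + 1 ≤ padicValNat m i)).card := by
    rw [← Finset.card_union_of_disjoint]
    · congr 1
      rw [← Finset.filter_or]
      apply Finset.filter_congr
      intro i _
      simp only [eq_comm (a := padicValNat m i)]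
      constructor
      · intro h
        rcases eq_or_lt_of_le h with h' | h'
        · exact Or.inl h'
        · exact Or.inr h'
      · rintro (h | h)
        · exact h.le
        · exact le_trans (Nat.le_succ t) h
    · rw [Finset.disjoint_filter]
      intro i _ h1 h2
      omega
  rw [card_val_ge hm, card_val_ge hm] at key
  omega

lemma G_eq {m : ℕ} (hm : 1 < m) (N : ℕ) :
    ((Finset.Icc 1 N).filter (fun i => Odd (padicValNat m i))).card
      = ∑ k ∈ Finset.range (N + 1), (N / m ^ (2 * k + 1) - N / m ^ (2 * k + 2)) := by
  have : (Finset.Icc 1 N).filter (fun i => Odd (padicValNat m i))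
      = (Finset.range (N + 1)).biUnion
          (fun k => (Finset.Icc 1 N).filter (fun i => padicValNat m i = 2 * k + 1)) := by
    ext i
    simp only [Finset.mem_biUnion, Finset.mem_filter, Finset.mem_Icc, Finset.mem_range]
    constructor
    · rintro ⟨⟨h1, h2⟩, ⟨j, hj⟩⟩
      have hv : padicValNat m i ≤ N := by
        have h3 := padicValNat_le_nat_log (p := m) i
        exact le_trans h3 (le_trans (Nat.log_le_self m i) h2)
      refine ⟨j, by omega, ⟨h1, h2⟩, by omega⟩
    · rintro ⟨k, hk, ⟨h1, h2⟩, h3⟩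
      exact ⟨⟨h1, h2⟩, ⟨k, by omega⟩⟩
  rw [this, Finset.card_biUnion]
  · apply Finset.sum_congr rfl
    intro k _
    rw [card_val_eq hm]
  · intro a _ b _ hab
    rw [Function.onFun, Finset.disjoint_filter]
    intro i _ h1 h2
    omega

lemma sum_real {M : ℝ} (hM : 1 < M) (N : ℝ) (K : ℕ) :
    ∑ k ∈ Finset.range K, (N / M ^ (2 * k + 1) - N / M ^ (2 * k + 2))
      = N / (M + 1) * (1 - ((M ^ 2)⁻¹) ^ K) := by
  have h0 : (0:ℝ) < M := by linarith
  have h1 : M ≠ 0 := ne_of_gt h0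
  have hr : ((M ^ 2)⁻¹ : ℝ) ≠ 1 := by
    intro h
    have : M ^ 2 = 1 := by
      field_simp at h
      linarith [h]
    nlinarith
  have hterm : ∀ k : ℕ, N / M ^ (2 * k + 1) - N / M ^ (2 * k + 2)
      = (N * (M - 1) / M ^ 2) * ((M ^ 2)⁻¹) ^ k := by
    intro k
    have e1 : M ^ (2 * k + 1) = (M ^ 2) ^ k * M := by
      rw [← pow_mul]; ring
    have e2 : M ^ (2 * k + 2) = (M ^ 2) ^ k * M ^ 2 := by
      rw [← pow_mul, ← pow_add]
    have hpk : ((M ^ 2) ^ k : ℝ) ≠ 0 := pow_ne_zero _ (pow_ne_zero _ h1)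
    rw [e1, e2, inv_pow]
    field_simp
  rw [Finset.sum_congr rfl (fun k _ => hterm k), ← Finset.mul_sum, geom_sum_eq hr]
  have h2 : ((M ^ 2)⁻¹ : ℝ) - 1 ≠ 0 := sub_ne_zero.mpr hr
  have h3 : M + 1 ≠ 0 := by linarith
  rw [inv_pow]
  have hpk : ((M ^ 2) ^ K : ℝ) ≠ 0 := pow_ne_zero _ (pow_ne_zero _ h1)
  have hsq : (M ^ 2 : ℝ) ≠ 0 := pow_ne_zero _ h1
  have hne : (1 : ℝ) - M ^ 2 ≠ 0 := by nlinarith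
  have e3 : ((M ^ 2)⁻¹ : ℝ) - 1 = (1 - M ^ 2) / M ^ 2 := by field_simp
  have e4 : (((M ^ 2) ^ K)⁻¹ : ℝ) - 1 = (1 - (M ^ 2) ^ K) / (M ^ 2) ^ K := by field_simp
  rw [e3, e4]
  field_simp
  ring

lemma key_bound {m : ℕ} (hm : 1 < m) {N : ℕ} (hN : 0 < N) :
    |(((Finset.Icc 1 N).filter (fun i => Odd (padicValNat m i))).card : ℝ)
      - (N : ℝ) / ((m : ℝ) + 1)| ≤ (Nat.log m N : ℝ) + 2 := by
  set L := Nat.log m N with hL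
  set K := L + 1 with hK
  have hMpos : (0:ℝ) < (m:ℝ) := by positivity
  have hM1 : (1:ℝ) < (m:ℝ) := by exact_mod_cast hm
  -- step A : truncate the sum
  have hstepA : ((Finset.Icc 1 N).filter (fun i => Odd (padicValNat m i))).card
      = ∑ k ∈ Finset.range K, (N / m ^ (2 * k + 1) - N / m ^ (2 * k + 2)) := by
    rw [G_eq hm]
    symm
    apply Finset.sum_subset
    · apply Finset.range_subset_range.mpr
      have := Nat.log_le_self m N
      omega
    · intro k hk1 hk2
      simp only [Finset.mem_range] at hk1 hk2
      have hk : K ≤ k := by omega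
      have h1 : N < m ^ (2 * k + 1) := by
        rw [← Nat.log_lt_iff_lt_pow hm hN.ne']
        omega
      have h2 : N < m ^ (2 * k + 2) := by
        rw [← Nat.log_lt_iff_lt_pow hm hN.ne']
        omega
      rw [Nat.div_eq_of_lt h1, Nat.div_eq_of_lt h2]
      rfl
  -- step B : cast to ℝ
  have hdivle : ∀ k : ℕ, N / m ^ (2 * k + 2) ≤ N / m ^ (2 * k + 1) :=
    fun k => Nat.div_le_div_left (Nat.pow_le_pow_right (by omega) (by omega)) (by positivity)
  have hstepB : ((((Finset.Icc 1 N).filter (fun i => Odd (padicValNat m i))).card : ℕ) : ℝ)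
      = ∑ k ∈ Finset.range K, (((N / m ^ (2 * k + 1) : ℕ) : ℝ) - ((N / m ^ (2 * k + 2) : ℕ) : ℝ)) := by
    rw [hstepA, Nat.cast_sum]
    exact Finset.sum_congr rfl fun k _ => Nat.cast_sub (hdivle k)
  -- per-term real bounds
  have hdivreal : ∀ (a b : ℕ), 0 < b →
      (a : ℝ) / b - 1 < ((a / b : ℕ) : ℝ) ∧ ((a / b : ℕ) : ℝ) ≤ (a : ℝ) / b := by
    intro a b hb
    constructor
    · have hdm : (b * (a / b) + a % b : ℕ) = a := Nat.div_add_mod a b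
      have hmod : a % b < b := Nat.mod_lt a hb
      have hdm' : (b:ℝ) * (((a / b : ℕ)):ℝ) + (((a % b : ℕ)):ℝ) = (a:ℝ) := by exact_mod_cast hdm
      have hmod' : (((a % b : ℕ)):ℝ) < (b:ℝ) := by exact_mod_cast hmod
      have hb' : (0:ℝ) < (b:ℝ) := by exact_mod_cast hb
      rw [div_sub_one (ne_of_gt hb'), div_lt_iff₀ hb']
      nlinarith
    · exact Nat.cast_div_le
  have hpowpos : ∀ t : ℕ, (0:ℝ) < (m:ℝ) ^ t := fun t => by positivity
  have hcastpow : ∀ t : ℕ, ((m ^ t : ℕ) : ℝ) = (m : ℝ) ^ t := fun t => by push_cast; ring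
  -- the real model sum
  set S : ℝ := ∑ k ∈ Finset.range K, ((N:ℝ) / (m:ℝ) ^ (2 * k + 1) - (N:ℝ) / (m:ℝ) ^ (2 * k + 2))
    with hS
  have hub : ((((Finset.Icc 1 N).filter (fun i => Odd (padicValNat m i))).card : ℕ) : ℝ)
      ≤ S + K := by
    rw [hstepB, hS]
    have : (K : ℝ) = ∑ _k ∈ Finset.range K, (1:ℝ) := by simp
    rw [this, ← Finset.sum_add_distrib]
    apply Finset.sum_le_sum
    intro k _
    have h1 := (hdivreal N (m ^ (2 * k + 1)) (by positivity)).2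
    have h2 := (hdivreal N (m ^ (2 * k + 2)) (by positivity)).1
    rw [hcastpow] at h1 h2
    linarith
  have hlb : S - K ≤ ((((Finset.Icc 1 N).filter (fun i => Odd (padicValNat m i))).card : ℕ) : ℝ) := by
    rw [hstepB, hS]
    have : (K : ℝ) = ∑ _k ∈ Finset.range K, (1:ℝ) := by simp
    rw [this, ← Finset.sum_sub_distrib]
    apply Finset.sum_le_sum
    intro k _
    have h1 := (hdivreal N (m ^ (2 * k + 1)) (by positivity)).1
    have h2 := (hdivreal N (m ^ (2 * k + 2)) (by positivity)).2
    rw [hcastpow] at h1 h2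
    linarith
  -- evaluate S
  have hSeq : S = (N:ℝ) / ((m:ℝ) + 1) * (1 - (((m:ℝ) ^ 2)⁻¹) ^ K) := sum_real hM1 _ _
  have hrK : (0:ℝ) ≤ (((m:ℝ) ^ 2)⁻¹) ^ K := by positivity
  have htail : (N:ℝ) / ((m:ℝ) + 1) * (((m:ℝ) ^ 2)⁻¹) ^ K ≤ 1 := by
    have hNlt : (N:ℝ) < (m:ℝ) ^ K := by
      have := Nat.lt_pow_succ_log_self hm N
      exact_mod_cast this
    have h1 : (N:ℝ) / ((m:ℝ) + 1) ≤ (N:ℝ) := by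
      rw [div_le_iff₀ (by linarith)]
      nlinarith [Nat.cast_nonneg (α := ℝ) N]
    have h2 : (((m:ℝ) ^ 2)⁻¹) ^ K = ((m:ℝ) ^ K * (m:ℝ) ^ K)⁻¹ := by
      rw [inv_pow, ← pow_mul]
      congr 2
      ring
    rw [h2]
    have hmK : (0:ℝ) < (m:ℝ) ^ K := by positivity
    calc (N:ℝ) / ((m:ℝ) + 1) * ((m:ℝ) ^ K * (m:ℝ) ^ K)⁻¹
        ≤ (N:ℝ) * ((m:ℝ) ^ K * (m:ℝ) ^ K)⁻¹ := by
          apply mul_le_mul_of_nonneg_right h1 (by positivity)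
      _ ≤ (m:ℝ) ^ K * ((m:ℝ) ^ K * (m:ℝ) ^ K)⁻¹ := by
          apply mul_le_mul_of_nonneg_right hNlt.le (by positivity)
      _ = ((m:ℝ) ^ K)⁻¹ := by field_simp
      _ ≤ 1 := by
          rw [inv_le_one_iff₀]
          right
          exact one_le_pow₀ hM1.le
  have hSub : S ≤ (N:ℝ) / ((m:ℝ) + 1) := by
    rw [hSeq]
    have hN1 : (0:ℝ) ≤ (N:ℝ) / ((m:ℝ) + 1) := by positivity
    nlinarith
  have hSlb : (N:ℝ) / ((m:ℝ) + 1) - 1 ≤ S := by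
    rw [hSeq]
    nlinarith
  rw [abs_le]
  constructor
  · have : (K:ℝ) = (L:ℝ) + 1 := by push_cast [hK]; ring
    linarith
  · have : (K:ℝ) = (L:ℝ) + 1 := by push_cast [hK]; ring
    linarith

lemma natlog_le {m N : ℕ} (hm : 1 < m) (hN : 0 < N) :
    (Nat.log m N : ℝ) ≤ 2 * Real.log N := by
  set L := Nat.log m N
  have h2L : (2 : ℕ) ^ L ≤ N := by
    calc (2:ℕ) ^ L ≤ m ^ L := Nat.pow_le_pow_left hm L
      _ ≤ N := Nat.pow_log_le_self m hN.ne'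
  have h2L' : ((2:ℝ)) ^ L ≤ (N:ℝ) := by exact_mod_cast h2L
  have hlog : (L : ℝ) * Real.log 2 ≤ Real.log N := by
    have := Real.log_le_log (by positivity) h2L'
    rwa [Real.log_pow] at this
  have hl2 : (0.6931471803 : ℝ) < Real.log 2 := Real.log_two_gt_d9
  nlinarith [Nat.cast_nonneg (α := ℝ) L]

theorem stmt4 (m : ℕ) (hm : 1 < m)
    (G : ℕ → ℕ)
    (hG : ∀ N, G N = ((Finset.Icc 1 N).filter (fun i => Odd (padicValNat m i))).card) :
    Tendsto (fun N : ℕ => (G N : ℝ) / N) atTop (𝓝 (1 / (m + 1))) := by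
  have hM1 : (1:ℝ) < (m:ℝ) := by exact_mod_cast hm
  have hm1 : ((m:ℝ) + 1) ≠ 0 := by linarith
  -- f N := G N / N - 1/(m+1) tends to 0
  have hf : Tendsto (fun N : ℕ => (G N : ℝ) / N - 1 / ((m:ℝ) + 1)) atTop (𝓝 0) := by
    apply squeeze_zero_norm' (a := fun N : ℕ => (2 * Real.log N + 2) / N)
    · filter_upwards [eventually_ge_atTop 1] with N hN
      have hN0 : 0 < N := hN
      have hNR : (0:ℝ) < (N:ℝ) := by exact_mod_cast hN0
      have hkey := key_bound hm hN0
      rw [← hG N] at hkey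
      have heq : (G N : ℝ) / N - 1 / ((m:ℝ) + 1)
          = ((G N : ℝ) - (N:ℝ) / ((m:ℝ) + 1)) / N := by
        field_simp
      rw [Real.norm_eq_abs, heq, abs_div, abs_of_pos hNR]
      gcongr
      calc |(G N : ℝ) - (N:ℝ) / ((m:ℝ) + 1)| ≤ (Nat.log m N : ℝ) + 2 := hkey
        _ ≤ 2 * Real.log N + 2 := by linarith [natlog_le hm hN0]
    · have h1 : Tendsto (fun x : ℝ => Real.log x / x) atTop (𝓝 0) :=
        Real.isLittleO_log_id_atTop.tendsto_div_nhds_zero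
      have h2 : Tendsto (fun N : ℕ => Real.log N / N) atTop (𝓝 0) :=
        h1.comp tendsto_natCast_atTop_atTop
      have h3 : Tendsto (fun N : ℕ => 2 * (Real.log N / N) + 2 / N) atTop (𝓝 (2 * 0 + 0)) :=
        (h2.const_mul 2).add (tendsto_const_div_atTop_nhds_zero_nat 2)
      simp only [mul_zero, add_zero] at h3
      apply h3.congr
      intro N
      ring
  have := hf.add tendsto_const_nhds (b := 1 / ((m:ℝ) + 1))
  simp only [zero_add] at this
  apply this.congr
  intro N
  ring
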